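/- If 1 < α < 2, w > 0, and p, q ∈ P_{α,w}, then d_α(T[p], T[q]) ≤ (1/2 + 1/(α+1)) d_α(p,q), where d_α(p,q) = sup_{s>0} |p̂(s) − q̂(s)| / s^α. In particular, since 1/2 + 1/(α+1) < 1 for α > 1, T is a contraction on P_{α,w} in the metric d_α. -/

import Mathlib

open MeasureTheory Real Set
open scoped ENNReal

noncomputable def T (p : ℝ → ℝ) (x : ℝ) : ℝ :=
  (1/2) * (∫ u in (0:ℝ)..x, p (x - u) * ∫ v in Ioi u, p v / v)
    + (1/2) * ∫ u in Ioi x, p u / u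

noncomputable def laplace (p : ℝ → ℝ) (s : ℝ) : ℝ :=
  ∫ x in Ioi (0:ℝ), Real.exp (-(s * x)) * p x

def memP (α w : ℝ) (p : ℝ → ℝ) : Prop :=
  IntegrableOn p (Ioi 0) ∧ (∀ᵐ x ∂(volume.restrict (Ioi (0:ℝ))), 0 ≤ p x) ∧
    (∫ x in Ioi (0:ℝ), p x = 1) ∧ IntegrableOn (fun x => x ^ α * p x) (Ioi 0) ∧
    ∫ x in Ioi (0:ℝ), x * p x = w

noncomputable def Ee (s x : ℝ) : ℝ≥0∞ := ENNReal.ofReal (Real.exp (-(s*x)))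

noncomputable def lapE (P : ℝ → ℝ) (s : ℝ) : ℝ≥0∞ :=
  ∫⁻ x in Ioi (0:ℝ), Ee s x * ENNReal.ofReal (P x)

noncomputable def glE (P : ℝ → ℝ) (u : ℝ) : ℝ≥0∞ :=
  ∫⁻ v in Ioi u, ENNReal.ofReal (P v / v)

noncomputable def LgE (P : ℝ → ℝ) (s : ℝ) : ℝ≥0∞ :=
  ∫⁻ u in Ioi (0:ℝ), Ee s u * glE P u

lemma Ee_le_one {s x : ℝ} (hs : 0 ≤ s) (hx : 0 ≤ x) : Ee s x ≤ 1 := by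
  simp only [Ee]
  rw [← ENNReal.ofReal_one]
  exact ENNReal.ofReal_le_ofReal (by
    rw [Real.exp_le_one_iff]
    simp [mul_nonneg hs hx])

lemma Ee_add (s a b : ℝ) : Ee s (a + b) = Ee s a * Ee s b := by
  simp only [Ee, ← ENNReal.ofReal_mul (Real.exp_pos _).le, ← Real.exp_add]
  ring_nf

lemma Ee_measurable (s : ℝ) : Measurable (Ee s) := by
  apply ENNReal.measurable_ofReal.comp
  fun_prop

lemma Ee_pos (s x : ℝ) : 0 < Ee s x := by
  simp [Ee, ENNReal.ofReal_pos, Real.exp_pos]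

lemma exp_integral (c : ℝ) (hc : c ≠ 0) (b : ℝ) :
    ∫ t in (0:ℝ)..b, Real.exp (-(c*t)) = (1 - Real.exp (-(c*b)))/c := by
  have hD : ∀ t ∈ uIcc (0:ℝ) b,
      HasDerivAt (fun t => -(Real.exp (-(c*t))/c)) (Real.exp (-(c*t))) t := by
    intro t _
    have h1 : HasDerivAt (fun t : ℝ => -(c*t)) (-c) t := by
      simpa using ((hasDerivAt_neg t).const_mul c)
    have h3 := (h1.exp.div_const c).neg
    have h4 : -(Real.exp (-(c*t)) * -c / c) = Real.exp (-(c*t)) := by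
      rw [mul_neg, neg_div, neg_neg, mul_div_cancel_right₀ _ hc]
    rw [← h4]; exact h3
  have hint : IntervalIntegrable (fun t => Real.exp (-(c*t))) volume 0 b :=
    (by fun_prop : Continuous fun t : ℝ => Real.exp (-(c*t))).intervalIntegrable 0 b
  rw [intervalIntegral.integral_eq_sub_of_hasDerivAt hD hint]
  simp [mul_comm]
  ring

lemma lintegral_Ioi_translate (h : ℝ → ℝ≥0∞) (u : ℝ) :
    ∫⁻ x in Ioi u, h (x - u) = ∫⁻ x in Ioi (0:ℝ), h x := by
  rw [← lintegral_indicator measurableSet_Ioi, ← lintegral_indicator measurableSet_Ioi]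
  have key : ∀ x, (Ioi u).indicator (fun x => h (x - u)) x = (Ioi 0).indicator h (x - u) := by
    intro x
    by_cases hx : u < x
    · rw [indicator_of_mem (show x ∈ Ioi u from hx),
        indicator_of_mem (show x - u ∈ Ioi (0:ℝ) from sub_pos.mpr hx)]
    · rw [indicator_of_notMem (show x ∉ Ioi u from hx),
        indicator_of_notMem (show x - u ∉ Ioi (0:ℝ) from fun h' => hx (sub_pos.mp h'))]
  simp_rw [key]
  exact lintegral_sub_right_eq_self ((Ioi (0:ℝ)).indicator h) u

lemma lint_Ee {s : ℝ} (hs : 0 < s) {v : ℝ} (hv : 0 ≤ v) :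
    ∫⁻ u in Ioo (0:ℝ) v, Ee s u = ENNReal.ofReal ((1 - Real.exp (-(s*v)))/s) := by
  have hcont : Continuous fun u : ℝ => Real.exp (-(s*u)) := by fun_prop
  rw [show (Ee s) = fun u => ENNReal.ofReal (Real.exp (-(s*u))) from rfl,
    ← ofReal_integral_eq_lintegral_ofReal
      (((hcont.intervalIntegrable 0 v).1.mono_set Ioo_subset_Ioc_self))
      (Filter.Eventually.of_forall fun u => (Real.exp_pos _).le)]
  congr 1
  rw [← integral_Ioc_eq_integral_Ioo, ← intervalIntegral.integral_of_le hv]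
  exact exp_integral s hs.ne' v

lemma lintegral_Ioi_Ioo_swap (F : ℝ → ℝ → ℝ≥0∞) (hF : Measurable (Function.uncurry F)) :
    ∫⁻ u in Ioi (0:ℝ), ∫⁻ v in Ioi u, F u v = ∫⁻ v in Ioi (0:ℝ), ∫⁻ u in Ioo 0 v, F u v := by
  set G : ℝ → ℝ → ℝ≥0∞ := fun u v => if 0 < u ∧ u < v then F u v else 0 with hG
  have hGmeas : Measurable (Function.uncurry G) := by
    refine Measurable.ite ?_ hF measurable_const
    exact (measurableSet_lt measurable_const measurable_fst).inter
      (measurableSet_lt measurable_fst measurable_snd)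
  have h1 : ∫⁻ u in Ioi (0:ℝ), ∫⁻ v in Ioi u, F u v = ∫⁻ u, ∫⁻ v, G u v := by
    rw [← lintegral_indicator measurableSet_Ioi]
    refine lintegral_congr fun u => ?_
    by_cases hu : 0 < u
    · rw [indicator_of_mem (show u ∈ Ioi (0:ℝ) from hu), ← lintegral_indicator measurableSet_Ioi]
      refine lintegral_congr fun v => ?_
      by_cases hv : u < v
      · simp [hG, hu, hv, indicator_of_mem (show v ∈ Ioi u from hv)]
      · simp [hG, hu, hv, indicator_of_notMem (show v ∉ Ioi u from hv)]
    · rw [indicator_of_notMem (show u ∉ Ioi (0:ℝ) from hu)]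
      have : (fun v => G u v) = fun _ => 0 := funext fun v => by simp [hG, hu]
      simp [this]
  have h2 : ∫⁻ v in Ioi (0:ℝ), ∫⁻ u in Ioo 0 v, F u v = ∫⁻ v, ∫⁻ u, G u v := by
    rw [← lintegral_indicator measurableSet_Ioi]
    refine lintegral_congr fun v => ?_
    by_cases hv : 0 < v
    · rw [indicator_of_mem (show v ∈ Ioi (0:ℝ) from hv), ← lintegral_indicator measurableSet_Ioo]
      refine lintegral_congr fun u => ?_
      by_cases hu : u ∈ Ioo (0:ℝ) v
      · simp [hG, hu.1, hu.2, indicator_of_mem hu]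
      · rw [indicator_of_notMem hu]
        have : ¬ (0 < u ∧ u < v) := by
          intro h; exact hu ⟨h.1, h.2⟩
        simp [hG, this]
    · rw [indicator_of_notMem (show v ∉ Ioi (0:ℝ) from hv)]
      have : (fun u => G u v) = fun _ => 0 := funext fun u => by
        have : ¬ (0 < u ∧ u < v) := fun h => hv (lt_trans h.1 h.2)
        simp [hG, this]
      simp [this]
  rw [h1, h2, lintegral_lintegral_swap hGmeas.aemeasurable]

section Main

variable {P : ℝ → ℝ} (hm : Measurable P) (h0 : ∀ x, 0 ≤ P x)
  (h1 : ∫⁻ x in Ioi (0:ℝ), ENNReal.ofReal (P x) ≤ 1)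

include hm h0

lemma lap_eq (s : ℝ) : laplace P s = (lapE P s).toReal := by
  rw [laplace, integral_eq_lintegral_of_nonneg_ae]
  · congr 1
    refine lintegral_congr fun x => ?_
    rw [ENNReal.ofReal_mul (Real.exp_pos _).le]
    rfl
  · exact Filter.Eventually.of_forall fun x => mul_nonneg (Real.exp_pos _).le (h0 x)
  · exact ((Real.measurable_exp.comp (by fun_prop)).mul hm).aestronglyMeasurable

include h1 in
lemma lapE_le_one {s : ℝ} (hs : 0 ≤ s) : lapE P s ≤ 1 := by
  refine le_trans ?_ h1
  refine setLIntegral_mono' measurableSet_Ioi fun x hx => ?_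
  calc Ee s x * ENNReal.ofReal (P x) ≤ 1 * ENNReal.ofReal (P x) :=
        mul_le_mul_left (Ee_le_one hs (le_of_lt hx)) _
    _ = _ := one_mul _

omit hm h0 in
lemma glE_antitone : Antitone (glE P) := fun _ _ hab =>
  lintegral_mono_set (Ioi_subset_Ioi hab)

omit hm h0 in
lemma glE_measurable : Measurable (glE P) := (glE_antitone (P := P)).measurable

include h1 in
lemma glE_lt_top {u : ℝ} (hu : 0 < u) : glE P u < ⊤ := by
  have : glE P u ≤ ENNReal.ofReal u⁻¹ * 1 := by
    rw [glE]
    calc ∫⁻ v in Ioi u, ENNReal.ofReal (P v / v)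
        ≤ ∫⁻ v in Ioi u, ENNReal.ofReal u⁻¹ * ENNReal.ofReal (P v) := by
          refine setLIntegral_mono' measurableSet_Ioi fun v hv => ?_
          rw [← ENNReal.ofReal_mul (inv_nonneg.mpr hu.le)]
          refine ENNReal.ofReal_le_ofReal ?_
          rw [div_eq_mul_inv, mul_comm u⁻¹]
          exact mul_le_mul_of_nonneg_left (inv_anti₀ hu (le_of_lt hv)) (h0 v)
      _ ≤ ENNReal.ofReal u⁻¹ * 1 := by
          rw [lintegral_const_mul _ hm.ennreal_ofReal]
          refine mul_le_mul_right (le_trans (lintegral_mono_set ?_) h1) _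
          exact Ioi_subset_Ioi hu.le
  exact lt_of_le_of_lt this (by simp [ENNReal.mul_lt_top, ENNReal.ofReal_lt_top])

lemma LgE_eq {s : ℝ} (hs : 0 < s) :
    LgE P s = ∫⁻ v in Ioi (0:ℝ),
      ENNReal.ofReal (P v * ((1 - Real.exp (-(s*v)))/(s*v))) := by
  have hswap := lintegral_Ioi_Ioo_swap
    (fun u v => Ee s u * ENNReal.ofReal (P v / v))
    (((Ee_measurable s).comp measurable_fst).mul
      (((hm.comp measurable_snd).div measurable_snd).ennreal_ofReal))
  have hLHS : LgE P s = ∫⁻ u in Ioi (0:ℝ), ∫⁻ v in Ioi u, Ee s u * ENNReal.ofReal (P v / v) := by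
    rw [LgE]
    refine setLIntegral_congr_fun measurableSet_Ioi (fun u _ => ?_)
    rw [glE, lintegral_const_mul _
      (Measurable.ennreal_ofReal (show Measurable fun v : ℝ => P v / v by fun_prop))]
  rw [hLHS, hswap]
  refine setLIntegral_congr_fun measurableSet_Ioi (fun v hv => ?_)
  have hv' : (0:ℝ) < v := hv
  have hexp : Real.exp (-(s*v)) ≤ 1 := by
    rw [Real.exp_le_one_iff]
    nlinarith
  rw [lintegral_mul_const _ (Ee_measurable s), lint_Ee hs (le_of_lt hv),
    ← ENNReal.ofReal_mul (div_nonneg (by linarith) hs.le)]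
  congr 1
  have hvne : (v:ℝ) ≠ 0 := ne_of_gt hv'
  field_simp

include h1 in
lemma LgE_le_one {s : ℝ} (hs : 0 < s) : LgE P s ≤ 1 := by
  rw [LgE_eq hm h0 hs]
  refine le_trans (setLIntegral_mono' measurableSet_Ioi fun v hv => ?_) h1
  refine ENNReal.ofReal_le_ofReal ?_
  have hv : (0:ℝ) < v := hv
  have hsv : 0 < s * v := mul_pos hs hv
  have hle : (1 - Real.exp (-(s*v)))/(s*v) ≤ 1 := by
    rw [div_le_one hsv]
    have := Real.add_one_le_exp (-(s*v))
    linarith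
  calc P v * ((1 - Real.exp (-(s*v)))/(s*v)) ≤ P v * 1 :=
        mul_le_mul_of_nonneg_left hle (h0 v)
    _ = P v := mul_one _


/-- The lintegral form of the convolution term. -/
noncomputable def ClE (P : ℝ → ℝ) (x : ℝ) : ℝ≥0∞ :=
  ∫⁻ u in Ioo (0:ℝ) x, ENNReal.ofReal (P (x - u)) * glE P u

omit h0 in
lemma ClE_measurable : Measurable (ClE P) := by
  have : ClE P = fun x => ∫⁻ u,
      (if 0 < u ∧ u < x then ENNReal.ofReal (P (x - u)) * glE P u else 0) := by
    funext x
    rw [ClE, ← lintegral_indicator measurableSet_Ioo]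
    refine lintegral_congr fun u => ?_
    by_cases hu : u ∈ Ioo (0:ℝ) x
    · simp [indicator_of_mem hu, hu.1, hu.2]
    · rw [indicator_of_notMem hu]
      have : ¬ (0 < u ∧ u < x) := fun h => hu ⟨h.1, h.2⟩
      simp [this]
  rw [this]
  apply Measurable.lintegral_prod_right
  refine Measurable.ite ?_ ?_ measurable_const
  · exact (measurableSet_lt measurable_const measurable_snd).inter
      (measurableSet_lt measurable_snd measurable_fst)
  · exact ((hm.comp (measurable_fst.sub measurable_snd)).ennreal_ofReal).mul
      ((glE_measurable (P := P)).comp measurable_snd)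

omit h0 in
lemma conv_eq {s : ℝ} (hs : 0 < s) :
    ∫⁻ x in Ioi (0:ℝ), Ee s x * ClE P x = lapE P s * LgE P s := by
  have hmeas2 : Measurable fun z : ℝ × ℝ =>
      Ee s z.2 * (ENNReal.ofReal (P (z.2 - z.1)) * glE P z.1) :=
    ((Ee_measurable s).comp measurable_snd).mul
      (((hm.comp (measurable_snd.sub measurable_fst)).ennreal_ofReal).mul
        ((glE_measurable (P := P)).comp measurable_fst))
  have hswap := lintegral_Ioi_Ioo_swap
    (fun u x => Ee s x * (ENNReal.ofReal (P (x - u)) * glE P u)) hmeas2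
  have hLHS : ∫⁻ x in Ioi (0:ℝ), Ee s x * ClE P x
      = ∫⁻ x in Ioi (0:ℝ), ∫⁻ u in Ioo 0 x,
          Ee s x * (ENNReal.ofReal (P (x - u)) * glE P u) := by
    refine setLIntegral_congr_fun measurableSet_Ioi
      (fun x _ => ?_)
    rw [ClE, lintegral_const_mul _ (show Measurable fun u : ℝ =>
      ENNReal.ofReal (P (x - u)) * glE P u from
      ((hm.comp (measurable_const.sub measurable_id)).ennreal_ofReal).mul
        (glE_measurable (P := P)))]
  rw [hLHS, ← hswap]
  have hinner : ∀ u ∈ Ioi (0:ℝ),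
      (∫⁻ x in Ioi u, Ee s x * (ENNReal.ofReal (P (x - u)) * glE P u))
        = Ee s u * glE P u * lapE P s := by
    intro u _
    have hx : ∀ x, Ee s x * (ENNReal.ofReal (P (x - u)) * glE P u)
        = (Ee s u * glE P u) * (Ee s (x - u) * ENNReal.ofReal (P (x - u))) := by
      intro x
      have : Ee s x = Ee s (x - u) * Ee s u := by
        rw [← Ee_add]; ring_nf
      rw [this]; ring
    simp_rw [hx]
    rw [lintegral_const_mul _ (show Measurable fun x : ℝ =>
      Ee s (x - u) * ENNReal.ofReal (P (x - u)) from
      (((Ee_measurable s).mul hm.ennreal_ofReal).comp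
        (measurable_id.sub measurable_const)))]
    congr 1
    exact (lintegral_Ioi_translate (fun y => Ee s y * ENNReal.ofReal (P y)) u).trans rfl
  rw [setLIntegral_congr_fun measurableSet_Ioi
    hinner]
  rw [lintegral_mul_const _ (show Measurable fun x => Ee s x * glE P x from (Ee_measurable s).mul (glE_measurable (P := P)))]
  rw [mul_comm]
  rfl


lemma gR_eq {u : ℝ} (hu : 0 ≤ u) :
    ∫ v in Ioi u, P v / v = (glE P u).toReal := by
  rw [integral_eq_lintegral_of_nonneg_ae, glE]
  · exact (ae_restrict_iff' measurableSet_Ioi).mpr (Filter.Eventually.of_forall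
      fun v hv => div_nonneg (h0 v) (le_of_lt (lt_of_le_of_lt hu hv)))
  · exact (hm.div measurable_id).aestronglyMeasurable

include h1 in
lemma CR_eq {x : ℝ} (hx : 0 < x) :
    (∫ u in (0:ℝ)..x, P (x - u) * ∫ v in Ioi u, P v / v) = (ClE P x).toReal := by
  rw [intervalIntegral.integral_of_le hx.le, integral_Ioc_eq_integral_Ioo]
  have step1 : ∫ u in Ioo (0:ℝ) x, P (x - u) * ∫ v in Ioi u, P v / v
      = ∫ u in Ioo (0:ℝ) x, P (x - u) * (glE P u).toReal := by
    refine setIntegral_congr_fun measurableSet_Ioo fun u hu => ?_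
    rw [gR_eq hm h0 hu.1.le]
  rw [step1, integral_eq_lintegral_of_nonneg_ae, ClE]
  · congr 1
    refine setLIntegral_congr_fun measurableSet_Ioo
      (fun u hu => ?_)
    rw [ENNReal.ofReal_mul (h0 _), ENNReal.ofReal_toReal (glE_lt_top hm h0 h1 hu.1).ne]
  · exact Filter.Eventually.of_forall fun u =>
      mul_nonneg (h0 _) ENNReal.toReal_nonneg
  · exact ((hm.comp (measurable_const.sub measurable_id)).mul
      (glE_measurable (P := P)).ennreal_toReal).aestronglyMeasurable

include h1 in
lemma lap_T_eq {s : ℝ} (hs : 0 < s) :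
    laplace (T P) s = (1/2) * ((lapE P s).toReal + 1) * (LgE P s).toReal := by
  have hA := lapE_le_one hm h0 h1 (s := s) hs.le
  have hB := LgE_le_one hm h0 h1 hs
  have hAne : lapE P s ≠ ⊤ := (lt_of_le_of_lt hA ENNReal.one_lt_top).ne
  have hBne : LgE P s ≠ ⊤ := (lt_of_le_of_lt hB ENNReal.one_lt_top).ne
  set F : ℝ → ℝ≥0∞ := fun x => Ee s x * (2⁻¹ * ClE P x + 2⁻¹ * glE P x) with hF
  have hFmeas : Measurable F :=
    (Ee_measurable s).mul (((ClE_measurable hm).const_mul _).add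
      ((glE_measurable (P := P)).const_mul _))
  have hfin : ∀ᵐ x ∂(volume.restrict (Ioi (0:ℝ))), Ee s x * ClE P x < ⊤ := by
    refine ae_lt_top ((Ee_measurable s).mul (ClE_measurable hm)) ?_
    rw [conv_eq hm hs]
    exact (lt_of_le_of_lt (mul_le_mul' hA hB) (by norm_num)).ne
  have hClE_fin : ∀ᵐ x ∂(volume.restrict (Ioi (0:ℝ))), ClE P x < ⊤ := by
    filter_upwards [hfin] with x hx
    by_contra hcon
    rw [not_lt, top_le_iff] at hcon
    rw [hcon, ENNReal.mul_top (Ee_pos s x).ne'] at hx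
    exact (lt_irrefl _ hx).elim
  have hFfin : ∀ᵐ x ∂(volume.restrict (Ioi (0:ℝ))), F x < ⊤ := by
    filter_upwards [hClE_fin, ae_restrict_mem measurableSet_Ioi] with x hx hx0
    refine ENNReal.mul_lt_top (by simp [Ee]) ?_
    exact ENNReal.add_lt_top.mpr ⟨ENNReal.mul_lt_top (by norm_num) hx,
      ENNReal.mul_lt_top (by norm_num) (glE_lt_top hm h0 h1 hx0)⟩
  have key : laplace (T P) s = ∫ x in Ioi (0:ℝ), (F x).toReal := by
    rw [laplace]
    refine integral_congr_ae ?_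
    filter_upwards [hClE_fin, ae_restrict_mem measurableSet_Ioi] with x hx hx0
    rw [T, CR_eq hm h0 h1 hx0, gR_eq hm h0 (le_of_lt hx0)]
    rw [hF]
    rw [ENNReal.toReal_mul, ENNReal.toReal_add
      (ENNReal.mul_lt_top (by norm_num) hx).ne
      (ENNReal.mul_lt_top (by norm_num) (glE_lt_top hm h0 h1 hx0)).ne,
      ENNReal.toReal_mul, ENNReal.toReal_mul]
    simp [Ee, ENNReal.toReal_ofReal (Real.exp_pos _).le]
  rw [key, integral_toReal hFmeas.aemeasurable hFfin]
  have lint_split : ∫⁻ x in Ioi (0:ℝ), F x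
      = 2⁻¹ * (lapE P s * LgE P s) + 2⁻¹ * LgE P s := by
    have : ∀ x, F x = 2⁻¹ * (Ee s x * ClE P x) + 2⁻¹ * (Ee s x * glE P x) := by
      intro x; rw [hF]; ring
    simp_rw [this]
    rw [lintegral_add_left (show Measurable fun x => 2⁻¹ * (Ee s x * ClE P x) from (((Ee_measurable s).mul (ClE_measurable hm))).const_mul _),
      lintegral_const_mul _ (show Measurable fun x => Ee s x * ClE P x from (Ee_measurable s).mul (ClE_measurable hm)),
      lintegral_const_mul _ (show Measurable fun x => Ee s x * glE P x from (Ee_measurable s).mul (glE_measurable (P := P))),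
      conv_eq hm hs]
    rfl
  rw [lint_split]
  rw [ENNReal.toReal_add
    (ENNReal.mul_lt_top (by norm_num) (ENNReal.mul_lt_top hAne.lt_top hBne.lt_top)).ne
    (ENNReal.mul_lt_top (by norm_num) hBne.lt_top).ne,
    ENNReal.toReal_mul, ENNReal.toReal_mul, ENNReal.toReal_mul]
  simp only [ENNReal.toReal_inv, ENNReal.toReal_ofNat]
  ring


omit hm h0 in
lemma lapE_antitone : Antitone (lapE P) := by
  intro a b hab
  refine setLIntegral_mono' measurableSet_Ioi fun x hx => ?_
  refine mul_le_mul_left (ENNReal.ofReal_le_ofReal (Real.exp_le_exp.mpr ?_)) _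
  have : (0:ℝ) < x := hx
  nlinarith

lemma laplace_eq_fun : (fun t => laplace P t) = fun t => (lapE P t).toReal :=
  funext fun t => lap_eq hm h0 t

lemma laplace_measurable : Measurable fun t => laplace P t := by
  rw [laplace_eq_fun hm h0]
  exact (lapE_antitone (P := P)).measurable.ennreal_toReal

lemma laplace_nonneg (s : ℝ) : 0 ≤ laplace P s := by
  rw [lap_eq hm h0]; exact ENNReal.toReal_nonneg

include h1 in
lemma laplace_le_one {s : ℝ} (hs : 0 ≤ s) : laplace P s ≤ 1 := by
  rw [lap_eq hm h0]
  have := ENNReal.toReal_mono (by norm_num) (lapE_le_one hm h0 h1 hs)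
  simpa using this

include h1 in
lemma P_integrable : IntegrableOn P (Ioi 0) := by
  refine ⟨hm.aestronglyMeasurable, ?_⟩
  rw [hasFiniteIntegral_iff_ofReal (Filter.Eventually.of_forall fun x => h0 x)]
  exact lt_of_le_of_lt h1 (by norm_num)

include h1 in
lemma GR_integrable {s : ℝ} (hs : 0 < s) :
    IntegrableOn (fun v => P v * ((1 - Real.exp (-(s*v)))/(s*v))) (Ioi 0) := by
  refine Integrable.mono' (P_integrable hm h0 h1) ?_ ?_
  · exact (hm.mul (by fun_prop : Measurable fun v : ℝ =>
      (1 - Real.exp (-(s*v)))/(s*v))).aestronglyMeasurable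
  · refine (ae_restrict_iff' measurableSet_Ioi).mpr (Filter.Eventually.of_forall
      fun v hv => ?_)
    have hv : (0:ℝ) < v := hv
    have hsv : 0 < s * v := mul_pos hs hv
    have hexp0 : Real.exp (-(s*v)) ≤ 1 := by rw [Real.exp_le_one_iff]; linarith
    have hpsi0 : 0 ≤ (1 - Real.exp (-(s*v)))/(s*v) := div_nonneg (by linarith) hsv.le
    have hpsi1 : (1 - Real.exp (-(s*v)))/(s*v) ≤ 1 := by
      rw [div_le_one hsv]
      have := Real.add_one_le_exp (-(s*v))
      linarith
    rw [Real.norm_eq_abs, abs_of_nonneg (mul_nonneg (h0 v) hpsi0)]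
    calc P v * ((1 - Real.exp (-(s*v)))/(s*v)) ≤ P v * 1 :=
          mul_le_mul_of_nonneg_left hpsi1 (h0 v)
      _ = P v := mul_one _

include h1 in
lemma GR_eq {s : ℝ} (hs : 0 < s) :
    (LgE P s).toReal = ∫ v in Ioi (0:ℝ), P v * ((1 - Real.exp (-(s*v)))/(s*v)) := by
  rw [LgE_eq hm h0 hs, integral_eq_lintegral_of_nonneg_ae]
  · refine (ae_restrict_iff' measurableSet_Ioi).mpr (Filter.Eventually.of_forall
      fun v hv => ?_)
    have hv : (0:ℝ) < v := hv
    have hexp0 : Real.exp (-(s*v)) ≤ 1 := by rw [Real.exp_le_one_iff]; nlinarith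
    have hsv : 0 < s * v := mul_pos hs hv
    exact mul_nonneg (h0 v) (div_nonneg (by linarith) hsv.le)
  · exact (hm.mul (by fun_prop : Measurable fun v : ℝ =>
      (1 - Real.exp (-(s*v)))/(s*v))).aestronglyMeasurable

end Main

section Diff

variable {P Q : ℝ → ℝ} (hmP : Measurable P) (h0P : ∀ x, 0 ≤ P x)
  (h1P : ∫⁻ x in Ioi (0:ℝ), ENNReal.ofReal (P x) ≤ 1)
  (hmQ : Measurable Q) (h0Q : ∀ x, 0 ≤ Q x)
  (h1Q : ∫⁻ x in Ioi (0:ℝ), ENNReal.ofReal (Q x) ≤ 1)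

include hmP h0P h1P hmQ h0Q h1Q

lemma G_diff {s : ℝ} (hs : 0 < s) :
    (LgE P s).toReal - (LgE Q s).toReal
      = s⁻¹ * ∫ t in Ioc (0:ℝ) s, (laplace P t - laplace Q t) := by
  have hPi := GR_integrable hmP h0P h1P hs
  have hQi := GR_integrable hmQ h0Q h1Q hs
  rw [GR_eq hmP h0P h1P hs, GR_eq hmQ h0Q h1Q hs, ← integral_sub hPi hQi]
  have step1 : ∫ v in Ioi (0:ℝ), (P v * ((1 - Real.exp (-(s*v)))/(s*v))
        - Q v * ((1 - Real.exp (-(s*v)))/(s*v)))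
      = ∫ v in Ioi (0:ℝ), s⁻¹ * ∫ t in Ioc (0:ℝ) s, Real.exp (-(t*v)) * (P v - Q v) := by
    refine setIntegral_congr_fun measurableSet_Ioi fun v hv => ?_
    have hv : (0:ℝ) < v := hv
    have hinner : ∫ t in Ioc (0:ℝ) s, Real.exp (-(t*v)) * (P v - Q v)
        = ((1 - Real.exp (-(v*s)))/v) * (P v - Q v) := by
      rw [← intervalIntegral.integral_of_le hs.le]
      rw [intervalIntegral.integral_mul_const]
      congr 1
      have : (fun t => Real.exp (-(t*v))) = fun t => Real.exp (-(v*t)) := by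
        funext t; ring_nf
      rw [this]
      exact exp_integral v hv.ne' s
    rw [hinner]
    field_simp
  rw [step1, integral_const_mul]
  -- now swap the two integrals
  have hFint : Integrable (Function.uncurry fun v t => Real.exp (-(t*v)) * (P v - Q v))
      ((volume.restrict (Ioi (0:ℝ))).prod (volume.restrict (Ioc (0:ℝ) s))) := by
    have hmeas : AEStronglyMeasurable
        (Function.uncurry fun v t => Real.exp (-(t*v)) * (P v - Q v))
        ((volume.restrict (Ioi (0:ℝ))).prod (volume.restrict (Ioc (0:ℝ) s))) := by
      refine Measurable.aestronglyMeasurable ?_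
      have : Function.uncurry (fun v t => Real.exp (-(t*v)) * (P v - Q v))
          = fun z : ℝ × ℝ => Real.exp (-(z.2*z.1)) * (P z.1 - Q z.1) := rfl
      rw [this]
      exact (Real.measurable_exp.comp (by fun_prop)).mul
        ((hmP.sub hmQ).comp measurable_fst)
    rw [integrable_prod_iff hmeas]
    constructor
    · refine Filter.Eventually.of_forall fun v => ?_
      have hcont : Continuous fun t : ℝ => Real.exp (-(t*v)) * (P v - Q v) := by fun_prop
      exact (hcont.intervalIntegrable 0 s).1
    · have hbound : ∀ᵐ v ∂(volume.restrict (Ioi (0:ℝ))),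
          ‖∫ t in Ioc (0:ℝ) s, ‖Real.exp (-(t*v)) * (P v - Q v)‖‖ ≤ s * (P v + Q v) := by
        refine (ae_restrict_iff' measurableSet_Ioi).mpr (Filter.Eventually.of_forall
          fun v hv => ?_)
        have hv : (0:ℝ) < v := hv
        have hIoc : (volume (Ioc (0:ℝ) s)).toReal = s := by
          simp [Real.volume_Ioc, ENNReal.toReal_ofReal hs.le]
        have hle : ∫ t in Ioc (0:ℝ) s, ‖Real.exp (-(t*v)) * (P v - Q v)‖
            ≤ ∫ _t in Ioc (0:ℝ) s, |P v - Q v| := by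
          refine setIntegral_mono_on ?_ ((integrableOn_const_iff (C := |P v - Q v|)).mpr (Or.inr ?_))
            measurableSet_Ioc fun t ht => ?_
          · have hcont : Continuous fun t : ℝ =>
              ‖Real.exp (-(t*v)) * (P v - Q v)‖ := by
              simp only [norm_mul]
              fun_prop
            exact (hcont.intervalIntegrable 0 s).1
          · exact measure_Ioc_lt_top
          · rw [norm_mul, Real.norm_eq_abs, Real.norm_eq_abs,
              abs_of_pos (Real.exp_pos _)]
            have : Real.exp (-(t*v)) ≤ 1 := by
              rw [Real.exp_le_one_iff]
              nlinarith [ht.1]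
            nlinarith [abs_nonneg (P v - Q v)]
        have hconst : ∫ _t in Ioc (0:ℝ) s, |P v - Q v| = s * |P v - Q v| := by
          rw [setIntegral_const, measureReal_def, hIoc, smul_eq_mul]
        have habs : |P v - Q v| ≤ P v + Q v := by
          rw [abs_sub_le_iff]
          constructor <;> nlinarith [h0P v, h0Q v]
        have hnn : 0 ≤ ∫ t in Ioc (0:ℝ) s, ‖Real.exp (-(t*v)) * (P v - Q v)‖ :=
          setIntegral_nonneg measurableSet_Ioc fun t _ => norm_nonneg _
        rw [Real.norm_eq_abs, abs_of_nonneg hnn]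
        calc _ ≤ s * |P v - Q v| := le_trans hle (le_of_eq hconst)
          _ ≤ s * (P v + Q v) := mul_le_mul_of_nonneg_left habs hs.le
      refine Integrable.mono' (((P_integrable hmP h0P h1P).add
        (P_integrable hmQ h0Q h1Q)).const_mul s) ?_ hbound
      exact (hmeas.norm.integral_prod_right')
  congr 1
  rw [integral_integral_swap hFint]
  refine setIntegral_congr_fun measurableSet_Ioc fun t ht => ?_
  rw [laplace, laplace, ← integral_sub]
  · refine setIntegral_congr_fun measurableSet_Ioi fun v _ => ?_
    ring
  · refine Integrable.mono' (P_integrable hmP h0P h1P) ?_ ?_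
    · exact ((Real.measurable_exp.comp (by fun_prop)).mul hmP).aestronglyMeasurable
    · refine (ae_restrict_iff' measurableSet_Ioi).mpr (Filter.Eventually.of_forall
        fun v hv => ?_)
      have hv : (0:ℝ) < v := hv
      rw [Real.norm_eq_abs, abs_mul, abs_of_pos (Real.exp_pos _),
        abs_of_nonneg (h0P v)]
      have : Real.exp (-(t*v)) ≤ 1 := by
        rw [Real.exp_le_one_iff]; nlinarith [ht.1]
      nlinarith [h0P v]
  · refine Integrable.mono' (P_integrable hmQ h0Q h1Q) ?_ ?_
    · exact ((Real.measurable_exp.comp (by fun_prop)).mul hmQ).aestronglyMeasurable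
    · refine (ae_restrict_iff' measurableSet_Ioi).mpr (Filter.Eventually.of_forall
        fun v hv => ?_)
      have hv : (0:ℝ) < v := hv
      rw [Real.norm_eq_abs, abs_mul, abs_of_pos (Real.exp_pos _),
        abs_of_nonneg (h0Q v)]
      have : Real.exp (-(t*v)) ≤ 1 := by
        rw [Real.exp_le_one_iff]; nlinarith [ht.1]
      nlinarith [h0Q v]

end Diff

section Reduction

lemma reduction (p : ℝ → ℝ) (hint : IntegrableOn p (Ioi 0))
    (hnn : ∀ᵐ x ∂(volume.restrict (Ioi (0:ℝ))), 0 ≤ p x)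
    (hone : ∫ x in Ioi (0:ℝ), p x = 1) :
    ∃ P : ℝ → ℝ, Measurable P ∧ (∀ x, 0 ≤ P x) ∧
      (∫⁻ x in Ioi (0:ℝ), ENNReal.ofReal (P x) ≤ 1) ∧
      (∀ t, laplace p t = laplace P t) ∧
      (∀ s, 0 < s → laplace (T p) s = laplace (T P) s) := by
  have hsm := hint.aestronglyMeasurable
  set p₀ := hsm.mk p with hp₀
  set P : ℝ → ℝ := fun x => if 0 < x then max (p₀ x) 0 else 0 with hP
  have hm : Measurable P := by
    refine Measurable.ite measurableSet_Ioi ?_ measurable_const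
    exact hsm.stronglyMeasurable_mk.measurable.max measurable_const
  have h0 : ∀ x, 0 ≤ P x := by
    intro x
    rw [hP]
    by_cases hx : 0 < x <;> simp [hx, le_max_right]
  have hPp : p =ᵐ[volume.restrict (Ioi (0:ℝ))] P := by
    filter_upwards [hsm.ae_eq_mk, hnn, ae_restrict_mem measurableSet_Ioi]
      with x h1 h2 h3
    rw [hP]
    simp only [if_pos (show (0:ℝ) < x from h3)]
    rw [← hp₀] at h1
    rw [← h1, max_eq_left h2]
  have h1 : ∫⁻ x in Ioi (0:ℝ), ENNReal.ofReal (P x) ≤ 1 := by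
    have heq : ∫⁻ x in Ioi (0:ℝ), ENNReal.ofReal (P x)
        = ∫⁻ x in Ioi (0:ℝ), ENNReal.ofReal (p x) :=
      lintegral_congr_ae (hPp.symm.mono fun x hx => by simp only [hx])
    rw [heq, ← ofReal_integral_eq_lintegral_ofReal hint hnn, hone]
    simp
  refine ⟨P, hm, h0, h1, ?_, ?_⟩
  · intro t
    exact integral_congr_ae (hPp.mono fun x hx => by simp only [hx])
  · intro s hs
    have htail : ∀ u : ℝ, 0 ≤ u → ∫ v in Ioi u, p v / v = ∫ v in Ioi u, P v / v := by
      intro u hu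
      refine integral_congr_ae ?_
      have := ae_restrict_of_ae_restrict_of_subset (Ioi_subset_Ioi hu) hPp
      exact this.mono fun v hv => by simp only [hv]
    -- null set for the translated comparison
    have hS : volume ({y | p y ≠ P y} ∩ Ioi 0) = 0 := by
      have := hPp
      rw [Filter.EventuallyEq, ae_iff, Measure.restrict_apply' measurableSet_Ioi] at this
      exact this
    obtain ⟨N, hSN, hNm, hN0⟩ := exists_measurable_superset_of_null hS
    have hTeq : ∀ x : ℝ, 0 < x → T p x = T P x := by
      intro x hx
      have hconv : (∫ u in (0:ℝ)..x, p (x - u) * ∫ v in Ioi u, p v / v)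
          = ∫ u in (0:ℝ)..x, P (x - u) * ∫ v in Ioi u, P v / v := by
        rw [intervalIntegral.integral_of_le hx.le, intervalIntegral.integral_of_le hx.le,
          integral_Ioc_eq_integral_Ioo, integral_Ioc_eq_integral_Ioo]
        refine integral_congr_ae ?_
        have hpre : volume ((fun u => x - u) ⁻¹' N) = 0 := by
          rw [(Measure.measurePreserving_sub_left volume x).measure_preimage
            hNm.nullMeasurableSet]
          exact hN0
        have hae : ∀ᵐ u ∂volume, x - u ∉ N := by
          rw [ae_iff]
          have hset : {u : ℝ | ¬ x - u ∉ N} = (fun u => x - u) ⁻¹' N := by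
            ext u; simp [not_not]
          rw [hset]
          exact hpre
        filter_upwards [ae_restrict_of_ae hae, ae_restrict_mem measurableSet_Ioo]
          with u hu hu2
        have hxu : x - u ∈ Ioi (0:ℝ) := sub_pos.mpr hu2.2
        have hp' : p (x - u) = P (x - u) := by
          by_contra hne
          exact hu (hSN ⟨hne, hxu⟩)
        simp only [hp', htail u hu2.1.le]
      rw [T, T, hconv, htail x hx.le]
    rw [laplace, laplace]
    refine integral_congr_ae ?_
    filter_upwards [ae_restrict_mem measurableSet_Ioi] with x hx
    simp only [hTeq x hx]

end Reduction

theorem T_contraction (α w : ℝ) (hα1 : 1 < α) (hα2 : α < 2) (hw : 0 < w)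
    (p q : ℝ → ℝ) (hp : memP α w p) (hq : memP α w q) :
    ∀ d : ℝ, (∀ s : ℝ, 0 < s → |laplace p s - laplace q s| / s ^ α ≤ d) →
      ∀ s : ℝ, 0 < s →
        |laplace (T p) s - laplace (T q) s| / s ^ α ≤ (1/2 + 1/(α + 1)) * d := by
  intro d hd s hs
  obtain ⟨P, hmP, h0P, h1P, hlapP, hlapTP⟩ := reduction p hp.1 hp.2.1 hp.2.2.1
  obtain ⟨Q, hmQ, h0Q, h1Q, hlapQ, hlapTQ⟩ := reduction q hq.1 hq.2.1 hq.2.2.1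
  have hα1' : (0:ℝ) < α + 1 := by linarith
  have hd0 : 0 ≤ d :=
    le_trans (div_nonneg (abs_nonneg _) (Real.rpow_nonneg zero_le_one α)) (hd 1 one_pos)
  have hsα : (0:ℝ) < s ^ α := Real.rpow_pos_of_pos hs α
  have hΔ : ∀ t : ℝ, 0 < t → |laplace P t - laplace Q t| ≤ d * t ^ α := by
    intro t ht
    have h' := hd t ht
    rw [hlapP t, hlapQ t, div_le_iff₀ (Real.rpow_pos_of_pos ht α)] at h'
    linarith
  set a₁ := laplace P s with ha₁
  set a₂ := laplace Q s with ha₂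
  set G₁ := (LgE P s).toReal with hG₁
  set G₂ := (LgE Q s).toReal with hG₂
  have ha₁0 : 0 ≤ a₁ := laplace_nonneg hmP h0P s
  have ha₂0 : 0 ≤ a₂ := laplace_nonneg hmQ h0Q s
  have ha₂1 : a₂ ≤ 1 := laplace_le_one hmQ h0Q h1Q hs.le
  have hG₁0 : 0 ≤ G₁ := ENNReal.toReal_nonneg
  have hG₁1 : G₁ ≤ 1 := by
    have := ENNReal.toReal_mono (by norm_num) (LgE_le_one hmP h0P h1P hs)
    simpa using this
  have hTid1 : laplace (T p) s = (1/2) * (a₁ + 1) * G₁ := by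
    rw [hlapTP s hs, lap_T_eq hmP h0P h1P hs, ha₁, lap_eq hmP h0P]
  have hTid2 : laplace (T q) s = (1/2) * (a₂ + 1) * G₂ := by
    rw [hlapTQ s hs, lap_T_eq hmQ h0Q h1Q hs, ha₂, lap_eq hmQ h0Q]
  have hGd : |G₁ - G₂| ≤ d * s ^ α / (α + 1) := by
    rw [hG₁, hG₂, G_diff hmP h0P h1P hmQ h0Q h1Q hs, abs_mul,
      abs_of_nonneg (inv_nonneg.mpr hs.le)]
    have hmeasΔ : Measurable fun t => laplace P t - laplace Q t :=
      (laplace_measurable hmP h0P).sub (laplace_measurable hmQ h0Q)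
    have hint1 : IntegrableOn (fun t => laplace P t - laplace Q t) (Ioc 0 s) := by
      refine Measure.integrableOn_of_bounded (M := 2) measure_Ioc_lt_top.ne
        hmeasΔ.aestronglyMeasurable ?_
      refine (ae_restrict_iff' measurableSet_Ioc).mpr
        (Filter.Eventually.of_forall fun t ht => ?_)
      rw [Real.norm_eq_abs, abs_sub_le_iff]
      have h1 := laplace_nonneg hmP h0P t
      have h2 := laplace_nonneg hmQ h0Q t
      have h3 := laplace_le_one hmP h0P h1P ht.1.le
      have h4 := laplace_le_one hmQ h0Q h1Q ht.1.le
      constructor <;> linarith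
    have hrint : IntegrableOn (fun t : ℝ => d * t ^ α) (Ioc 0 s) :=
      ((intervalIntegral.intervalIntegrable_rpow'
        (by linarith : (-1:ℝ) < α)).1).const_mul d
    have habs : |∫ t in Ioc (0:ℝ) s, (laplace P t - laplace Q t)|
        ≤ ∫ t in Ioc (0:ℝ) s, d * t ^ α := by
      have step1 : |∫ t in Ioc (0:ℝ) s, (laplace P t - laplace Q t)|
          ≤ ∫ t in Ioc (0:ℝ) s, |laplace P t - laplace Q t| := by
        simpa [Real.norm_eq_abs] using
          norm_integral_le_integral_norm (μ := volume.restrict (Ioc (0:ℝ) s))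
            (fun t => laplace P t - laplace Q t)
      refine le_trans step1 ?_
      refine setIntegral_mono_on hint1.abs hrint measurableSet_Ioc fun t ht => hΔ t ht.1
    have hval : ∫ t in Ioc (0:ℝ) s, d * t ^ α = d * (s ^ (α+1) / (α+1)) := by
      rw [integral_const_mul]
      congr 1
      rw [← intervalIntegral.integral_of_le hs.le,
        integral_rpow (Or.inl (by linarith : (-1:ℝ) < α)),
        Real.zero_rpow (by linarith : α + 1 ≠ 0)]
      ring
    calc s⁻¹ * |∫ t in Ioc (0:ℝ) s, (laplace P t - laplace Q t)|
        ≤ s⁻¹ * (d * (s ^ (α+1) / (α+1))) := by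
          refine mul_le_mul_of_nonneg_left ?_ (inv_nonneg.mpr hs.le)
          rw [← hval]; exact habs
      _ = d * s ^ α / (α + 1) := by
          rw [Real.rpow_add_one hs.ne']
          field_simp
  rw [hTid1, hTid2, div_le_iff₀ hsα]
  have hA : |a₁ - a₂| ≤ d * s ^ α := hΔ s hs
  have h1' : |(a₁ - a₂) * G₁| ≤ d * s ^ α := by
    rw [abs_mul, abs_of_nonneg hG₁0]
    calc |a₁ - a₂| * G₁ ≤ (d * s ^ α) * 1 :=
          mul_le_mul hA hG₁1 hG₁0 (mul_nonneg hd0 hsα.le)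
      _ = d * s ^ α := mul_one _
  have h2' : |(a₂ + 1) * (G₁ - G₂)| ≤ 2 * (d * s ^ α / (α + 1)) := by
    rw [abs_mul, abs_of_nonneg (by linarith : (0:ℝ) ≤ a₂ + 1)]
    exact mul_le_mul (by linarith) hGd (abs_nonneg _) (by norm_num)
  have hXeq : (1/2) * (a₁ + 1) * G₁ - (1/2) * (a₂ + 1) * G₂
      = (1/2) * ((a₁ - a₂) * G₁ + (a₂ + 1) * (G₁ - G₂)) := by ring
  have hXb : |(1/2) * (a₁ + 1) * G₁ - (1/2) * (a₂ + 1) * G₂|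
      ≤ (1/2) * (d * s ^ α + 2 * (d * s ^ α / (α + 1))) := by
    rw [hXeq, abs_mul, abs_of_nonneg (by norm_num : (0:ℝ) ≤ 1/2)]
    have := abs_add_le ((a₁ - a₂) * G₁) ((a₂ + 1) * (G₁ - G₂))
    have hsum : |(a₁ - a₂) * G₁ + (a₂ + 1) * (G₁ - G₂)|
        ≤ d * s ^ α + 2 * (d * s ^ α / (α + 1)) := by linarith
    linarith
  have hfinal : (1/2) * (d * s ^ α + 2 * (d * s ^ α / (α + 1)))
      = (1/2 + 1/(α + 1)) * d * s ^ α := by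
    field_simp
  calc |(1/2) * (a₁ + 1) * G₁ - (1/2) * (a₂ + 1) * G₂|
      ≤ (1/2) * (d * s ^ α + 2 * (d * s ^ α / (α + 1))) := hXb
    _ = (1/2 + 1/(α + 1)) * d * s ^ α := hfinal
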